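/- Let D = {(x,y) ∈ ℝ² : |y| < x and |y| < 2 - x}, viewed as a subset of ℂ via z = x + iy. For every t > 0, every integer n ≥ 1, and every z in the closure of D, one has |z + 2n| · |e^{-(z+2n)²/(4t)}| ≤ 4n e^{-n²/t}. -/

import Mathlib

open Complex

/-- The open square `D` with vertices `0, 1+i, 2, 1-i`, viewed in `ℂ` via `z = x + iy`. -/
def Dsq : Set ℂ := {z : ℂ | |z.im| < z.re ∧ |z.im| < 2 - z.re}

/-- For `t > 0`, `n ≥ 1` and `z` in the closure of `D`,
`|z + 2n| · |e^{-(z+2n)²/(4t)}| ≤ 4n e^{-n²/t}`. -/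
theorem heat_kernel_bound_pos_n (t : ℝ) (ht : 0 < t) (n : ℤ) (hn : 1 ≤ n)
    (z : ℂ) (hz : z ∈ closure Dsq) :
    ‖z + 2 * (n : ℂ)‖ * ‖Complex.exp (-(z + 2 * (n : ℂ)) ^ 2 / (4 * (t : ℂ)))‖ ≤
      4 * (n : ℝ) * Real.exp (-(n : ℝ) ^ 2 / t) := by
  -- From the closure, get the closed constraints
  have hC : IsClosed {w : ℂ | |w.im| ≤ w.re ∧ |w.im| ≤ 2 - w.re} := by
    apply IsClosed.inter
    · exact isClosed_le (continuous_abs.comp Complex.continuous_im) Complex.continuous_re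
    · exact isClosed_le (continuous_abs.comp Complex.continuous_im)
        (continuous_const.sub Complex.continuous_re)
  have hzc : |z.im| ≤ z.re ∧ |z.im| ≤ 2 - z.re := by
    refine closure_minimal (fun w hw => ?_) hC hz
    simp only [Dsq, Set.mem_setOf_eq] at hw
    exact ⟨hw.1.le, hw.2.le⟩
  set x := z.re with hx
  set y := z.im with hy
  have hx0 : 0 ≤ x := le_trans (abs_nonneg _) hzc.1
  have hx2 : x ≤ 2 := by linarith [le_trans (abs_nonneg _) hzc.2]
  have hy2x : y ^ 2 ≤ x ^ 2 := by
    have := _root_.sq_abs y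
    nlinarith [hzc.1, abs_nonneg y]
  have hy2x2 : y ^ 2 ≤ (2 - x) ^ 2 := by
    have := _root_.sq_abs y
    nlinarith [hzc.2, abs_nonneg y]
  have hn1 : (1 : ℝ) ≤ (n : ℝ) := by exact_mod_cast hn
  set w : ℂ := z + 2 * (n : ℂ) with hw
  have hwre : w.re = x + 2 * (n : ℝ) := by simp [hw, hx]
  have hwim : w.im = y := by simp [hw, hy]
  -- norm of exponential
  have hexp : ‖Complex.exp (-(w) ^ 2 / (4 * (t : ℂ)))‖ = Real.exp ((y ^ 2 - (x + 2 * (n:ℝ)) ^ 2) / (4 * t)) := by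
    rw [Complex.norm_exp]
    congr 1
    have h4t : (4 * (t : ℂ)) = ((4 * t : ℝ) : ℂ) := by push_cast; ring
    rw [h4t, Complex.div_ofReal_re]
    have h2 : ((-(w) ^ 2).re) = y ^ 2 - (x + 2 * (n:ℝ)) ^ 2 := by
      simp only [Complex.neg_re, pow_two, Complex.mul_re, hwre, hwim]
      ring
    rw [h2]
  rw [hexp]
  have hexp_le : Real.exp ((y ^ 2 - (x + 2 * (n:ℝ)) ^ 2) / (4 * t)) ≤ Real.exp (-(n : ℝ) ^ 2 / t) := by
    apply Real.exp_le_exp.mpr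
    rw [div_le_div_iff₀ (by linarith) ht]
    nlinarith [hy2x, hx0, hn1, ht.le, mul_nonneg (mul_nonneg hx0 (by linarith : (0:ℝ) ≤ (n:ℝ))) ht.le, mul_le_mul_of_nonneg_right hy2x ht.le, mul_nonneg (mul_nonneg (by linarith : (0:ℝ) ≤ (n:ℝ)) (by linarith : (0:ℝ) ≤ (n:ℝ))) ht.le]
  have hnorm : ‖w‖ ≤ 4 * (n : ℝ) := by
    have hsq : ‖w‖ ^ 2 = (x + 2 * (n:ℝ)) ^ 2 + y ^ 2 := by
      rw [Complex.sq_norm, Complex.normSq_apply, hwre, hwim]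
      ring
    nlinarith [norm_nonneg w, hy2x2, hx0, hx2, hn1]
  calc ‖w‖ * Real.exp ((y ^ 2 - (x + 2 * (n:ℝ)) ^ 2) / (4 * t))
      ≤ (4 * (n : ℝ)) * Real.exp (-(n : ℝ) ^ 2 / t) := by
        apply mul_le_mul hnorm hexp_le (Real.exp_nonneg _) (by linarith)
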